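/- arXiv:1912.11511 — 2 statements merged into one kernel-verified Lean document; each statement's English description precedes it below -/
import Mathlib

section
/- Let A, P, Q be n × n real matrices with P and Q symmetric positive definite, satisfying the Lyapunov equation P A + Aᵀ P = −Q. Let f : ℝ^n → ℝ^n be Lipschitz with constant ρ ≥ 0 and f(0) = 0, and suppose ρ ≤ λ_min(Q) / (2 λ_max(P)), where λ_min(Q) is the smallest eigenvalue of Q and λ_max(P) is the largest eigenvalue of P. Then for every x ∈ ℝ^n, the derivative of the Lyapunov function V(x) = ⟨x, P x⟩ along the vector field x ↦ A x + f(x) is nonpositive; quantitatively, 2⟨P x, A x + f(x)⟩ ≤ −(λ_min(Q) − 2 ρ λ_max(P)) ‖x‖² ≤ 0, where ⟨·,·⟩ and ‖·‖ are the Euclidean inner product and norm on ℝ^n. -/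
open Matrix
open scoped RealInnerProductSpace

section Aux

variable {n : ℕ}

lemma lyap_repr (M : Matrix (Fin n) (Fin n) ℝ) (hM : M.IsHermitian)
    (x : EuclideanSpace ℝ (Fin n)) (i : Fin n) :
    hM.eigenvectorBasis.repr (Matrix.toEuclideanLin M x) i
      = hM.eigenvalues i * hM.eigenvectorBasis.repr x i := by
  have hsym := Matrix.isHermitian_iff_isSymmetric.mp hM
  have h : Matrix.toEuclideanLin M (hM.eigenvectorBasis i)
      = hM.eigenvalues i • hM.eigenvectorBasis i := by
    have h2 := hM.mulVec_eigenvectorBasis i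
    apply PiLp.ext; intro j
    simpa [Matrix.toEuclideanLin_apply] using congrFun h2 j
  rw [OrthonormalBasis.repr_apply_apply, OrthonormalBasis.repr_apply_apply,
    ← hsym (hM.eigenvectorBasis i) x, h, inner_smul_left]
  simp

lemma lyap_inner_transpose (B : Matrix (Fin n) (Fin n) ℝ) (u v : EuclideanSpace ℝ (Fin n)) :
    ⟪u, Matrix.toEuclideanLin B v⟫ = ⟪Matrix.toEuclideanLin Bᵀ u, v⟫ := by
  simp only [Matrix.toEuclideanLin_apply, PiLp.inner_apply, RCLike.inner_apply, conj_trivial,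
    PiLp.toLp_apply, Matrix.mulVec, dotProduct, Matrix.transpose_apply,
    Finset.mul_sum, Finset.sum_mul]
  rw [Finset.sum_comm]
  apply Finset.sum_congr rfl; intro i _; apply Finset.sum_congr rfl; intro j _; ring

lemma lyap_inner_eq (M : Matrix (Fin n) (Fin n) ℝ) (hM : M.IsHermitian)
    (x : EuclideanSpace ℝ (Fin n)) :
    ⟪x, Matrix.toEuclideanLin M x⟫
      = ∑ i, hM.eigenvalues i * (hM.eigenvectorBasis.repr x i) ^ 2 := by
  rw [← hM.eigenvectorBasis.repr.inner_map_map x (Matrix.toEuclideanLin M x)]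
  simp only [PiLp.inner_apply, RCLike.inner_apply, conj_trivial, lyap_repr]
  apply Finset.sum_congr rfl; intro i _; ring

lemma lyap_norm_sq (M : Matrix (Fin n) (Fin n) ℝ) (hM : M.IsHermitian)
    (x : EuclideanSpace ℝ (Fin n)) :
    ‖x‖ ^ 2 = ∑ i, (hM.eigenvectorBasis.repr x i) ^ 2 := by
  rw [← real_inner_self_eq_norm_sq, ← hM.eigenvectorBasis.repr.inner_map_map x x]
  simp only [PiLp.inner_apply, RCLike.inner_apply, conj_trivial]
  apply Finset.sum_congr rfl; intro i _; ring

lemma lyap_rayleigh_low (hn : 0 < n) (M : Matrix (Fin n) (Fin n) ℝ) (hM : M.IsHermitian)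
    (x : EuclideanSpace ℝ (Fin n)) :
    (⨅ i, hM.eigenvalues i) * ‖x‖ ^ 2 ≤ ⟪x, Matrix.toEuclideanLin M x⟫ := by
  have : Nonempty (Fin n) := ⟨⟨0, hn⟩⟩
  rw [lyap_inner_eq M hM x, lyap_norm_sq M hM x, Finset.mul_sum]
  apply Finset.sum_le_sum
  intro i _
  have h1 : (⨅ j, hM.eigenvalues j) ≤ hM.eigenvalues i :=
    ciInf_le (Set.Finite.bddBelow (Set.finite_range _)) i
  have h2 : (0 : ℝ) ≤ (hM.eigenvectorBasis.repr x i) ^ 2 := sq_nonneg _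
  nlinarith

lemma lyap_norm_le (hn : 0 < n) (M : Matrix (Fin n) (Fin n) ℝ) (hM : M.PosDef)
    (x : EuclideanSpace ℝ (Fin n)) :
    ‖Matrix.toEuclideanLin M x‖ ≤ (⨆ i, hM.1.eigenvalues i) * ‖x‖ := by
  have : Nonempty (Fin n) := ⟨⟨0, hn⟩⟩
  set s := ⨆ i, hM.1.eigenvalues i with hs
  have hle : ∀ i, hM.1.eigenvalues i ≤ s :=
    fun i => le_ciSup (Set.Finite.bddAbove (Set.finite_range _)) i
  have hpos : ∀ i, 0 < hM.1.eigenvalues i := hM.eigenvalues_pos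
  have hs0 : 0 ≤ s := le_trans (hpos ⟨0, hn⟩).le (hle ⟨0, hn⟩)
  have key : ‖Matrix.toEuclideanLin M x‖ ^ 2 ≤ (s * ‖x‖) ^ 2 := by
    rw [← real_inner_self_eq_norm_sq,
      ← hM.1.eigenvectorBasis.repr.inner_map_map]
    simp only [PiLp.inner_apply, RCLike.inner_apply, conj_trivial, lyap_repr]
    have : (s * ‖x‖) ^ 2 = ∑ i, s ^ 2 * (hM.1.eigenvectorBasis.repr x i) ^ 2 := by
      rw [← Finset.mul_sum, ← lyap_norm_sq M hM.1 x]; ring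
    rw [this]
    apply Finset.sum_le_sum
    intro i _
    have h1 := hle i
    have h2 := (hpos i).le
    have h3 := mul_self_le_mul_self h2 h1
    nlinarith [sq_nonneg (hM.1.eigenvectorBasis.repr x i)]
  nlinarith [norm_nonneg (Matrix.toEuclideanLin M x), mul_nonneg hs0 (norm_nonneg x)]

lemma lyap_toEuclideanLin_mul (B C : Matrix (Fin n) (Fin n) ℝ) (x : EuclideanSpace ℝ (Fin n)) :
    Matrix.toEuclideanLin (B * C) x = Matrix.toEuclideanLin B (Matrix.toEuclideanLin C x) := by
  simp [Matrix.toEuclideanLin_apply, Matrix.mulVec_mulVec]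

end Aux

/-- Lyapunov stability condition: if `P A + Aᵀ P = −Q` with `P, Q` symmetric
positive definite, `f` is `ρ`-Lipschitz with `f 0 = 0`, and
`ρ ≤ λ_min(Q) / (2 λ_max(P))`, then the derivative of `V(x) = ⟨x, P x⟩` along
the vector field `x ↦ A x + f x` satisfies
`2⟨P x, A x + f x⟩ ≤ −(λ_min(Q) − 2 ρ λ_max(P)) ‖x‖² ≤ 0`. -/
theorem lyapunov_derivative_nonpos (n : ℕ) (hn : 0 < n)
    (A P Q : Matrix (Fin n) (Fin n) ℝ)
    (hP : P.PosDef) (hQ : Q.PosDef)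
    (hLyap : P * A + Aᵀ * P = -Q)
    (f : EuclideanSpace ℝ (Fin n) → EuclideanSpace ℝ (Fin n))
    (ρ : ℝ) (hρ0 : 0 ≤ ρ)
    (hLip : ∀ x y : EuclideanSpace ℝ (Fin n), ‖f x - f y‖ ≤ ρ * ‖x - y‖)
    (hf0 : f 0 = 0)
    (hρ : ρ ≤ (⨅ i, hQ.1.eigenvalues i) / (2 * ⨆ i, hP.1.eigenvalues i)) :
    ∀ x : EuclideanSpace ℝ (Fin n),
      2 * ⟪Matrix.toEuclideanLin P x, Matrix.toEuclideanLin A x + f x⟫ ≤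
          -((⨅ i, hQ.1.eigenvalues i) - 2 * ρ * ⨆ i, hP.1.eigenvalues i) * ‖x‖ ^ 2 ∧
      -((⨅ i, hQ.1.eigenvalues i) - 2 * ρ * ⨆ i, hP.1.eigenvalues i) * ‖x‖ ^ 2 ≤ 0 := by
  intro x
  have : Nonempty (Fin n) := ⟨⟨0, hn⟩⟩
  set μQ := ⨅ i, hQ.1.eigenvalues i with hμQ
  set μP := ⨆ i, hP.1.eigenvalues i with hμP
  have hμPpos : 0 < μP :=
    lt_of_lt_of_le (hP.eigenvalues_pos ⟨0, hn⟩)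
      (le_ciSup (Set.Finite.bddAbove (Set.finite_range _)) _)
  -- Pᵀ = P
  have hPt : Pᵀ = P := by
    have := hP.1
    rw [Matrix.IsHermitian, Matrix.conjTranspose] at this
    ext i j; simpa using congrFun (congrFun this i) j
  -- quadratic form identity
  have hPA : ⟪x, Matrix.toEuclideanLin (P * A) x⟫
      = ⟪Matrix.toEuclideanLin P x, Matrix.toEuclideanLin A x⟫ := by
    rw [lyap_toEuclideanLin_mul, lyap_inner_transpose, hPt]
  have hAP : ⟪x, Matrix.toEuclideanLin (Aᵀ * P) x⟫
      = ⟪Matrix.toEuclideanLin P x, Matrix.toEuclideanLin A x⟫ := by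
    rw [lyap_toEuclideanLin_mul, lyap_inner_transpose, Matrix.transpose_transpose,
      real_inner_comm]
  have hsum : 2 * ⟪Matrix.toEuclideanLin P x, Matrix.toEuclideanLin A x⟫
      = -⟪x, Matrix.toEuclideanLin Q x⟫ := by
    have h1 : 2 * ⟪Matrix.toEuclideanLin P x, Matrix.toEuclideanLin A x⟫
        = ⟪x, Matrix.toEuclideanLin (P * A) x + Matrix.toEuclideanLin (Aᵀ * P) x⟫ := by
      rw [inner_add_right, hPA, hAP]; ring
    rw [h1, ← LinearMap.add_apply, ← map_add, hLyap]
    simp [inner_neg_right]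
  -- bound on ⟪Px, f x⟫
  have hfx : ‖f x‖ ≤ ρ * ‖x‖ := by
    have := hLip x 0
    simpa [hf0] using this
  have hPfx : ⟪Matrix.toEuclideanLin P x, f x⟫ ≤ μP * ρ * ‖x‖ ^ 2 := by
    calc ⟪Matrix.toEuclideanLin P x, f x⟫ ≤ ‖Matrix.toEuclideanLin P x‖ * ‖f x‖ :=
          real_inner_le_norm _ _
      _ ≤ (μP * ‖x‖) * (ρ * ‖x‖) := by
          apply mul_le_mul (lyap_norm_le hn P hP x) hfx (norm_nonneg _)
          positivity
      _ = μP * ρ * ‖x‖ ^ 2 := by ring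
  -- Rayleigh bound on Q
  have hQray : μQ * ‖x‖ ^ 2 ≤ ⟪x, Matrix.toEuclideanLin Q x⟫ := lyap_rayleigh_low hn Q hQ.1 x
  -- combine
  have hρ' : ρ * (2 * μP) ≤ μQ :=
    (le_div_iff₀ (by positivity : (0:ℝ) < 2 * μP)).mp hρ
  have hx2 : (0 : ℝ) ≤ ‖x‖ ^ 2 := sq_nonneg _
  constructor
  · have : 2 * ⟪Matrix.toEuclideanLin P x, Matrix.toEuclideanLin A x + f x⟫
        = 2 * ⟪Matrix.toEuclideanLin P x, Matrix.toEuclideanLin A x⟫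
          + 2 * ⟪Matrix.toEuclideanLin P x, f x⟫ := by
      rw [inner_add_right]; ring
    rw [this, hsum]
    nlinarith
  · nlinarith
end

section
/- Let A, P, Q be n × n real matrices with P and Q symmetric positive definite, satisfying P A + Aᵀ P = −Q. Let f : ℝ^n → ℝ^n be Lipschitz with constant ρ ≥ 0 with f(0) = 0 and ρ ≤ λ_min(Q) / (2 λ_max(P)). Let x : ℝ → ℝ^n be differentiable with x′(t) = A x(t) + f(x(t)) for all t. Then the Lyapunov function along the trajectory, t ↦ ⟨x(t), P x(t)⟩, is non-increasing (antitone) on ℝ, where ⟨·,·⟩ is the Euclidean inner product on ℝ^n. -/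
open Matrix
open scoped RealInnerProductSpace

section Aux

variable {n : ℕ}

lemma aux_toEuclideanLin_mul_apply (M N : Matrix (Fin n) (Fin n) ℝ)
    (u : EuclideanSpace ℝ (Fin n)) :
    Matrix.toEuclideanLin (M * N) u = Matrix.toEuclideanLin M (Matrix.toEuclideanLin N u) := by
  simp [Matrix.toEuclideanLin_apply, Matrix.mulVec_mulVec]

lemma aux_inner_transpose (M : Matrix (Fin n) (Fin n) ℝ)
    (u v : EuclideanSpace ℝ (Fin n)) :
    ⟪u, Matrix.toEuclideanLin Mᵀ v⟫ = ⟪Matrix.toEuclideanLin M u, v⟫ := by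
  have h : Mᵀ = Mᴴ := by ext i j; simp [Matrix.conjTranspose_apply]
  rw [h, Matrix.toEuclideanLin_conjTranspose_eq_adjoint, LinearMap.adjoint_inner_right]

lemma aux_repr_apply (M : Matrix (Fin n) (Fin n) ℝ) (hM : M.IsHermitian)
    (y : EuclideanSpace ℝ (Fin n)) (j : Fin n) :
    hM.eigenvectorBasis.repr (Matrix.toEuclideanLin M y) j
      = hM.eigenvalues j * hM.eigenvectorBasis.repr y j := by
  rw [OrthonormalBasis.repr_apply_apply, OrthonormalBasis.repr_apply_apply]
  have hsym : LinearMap.IsSymmetric (Matrix.toEuclideanLin M) :=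
    Matrix.isHermitian_iff_isSymmetric.mp hM
  rw [← hsym (hM.eigenvectorBasis j) y]
  have hev : Matrix.toEuclideanLin M (hM.eigenvectorBasis j)
      = hM.eigenvalues j • hM.eigenvectorBasis j := by
    ext i
    exact congrFun (hM.mulVec_eigenvectorBasis j) i
  rw [hev, real_inner_smul_left]

lemma aux_normsq (B : OrthonormalBasis (Fin n) ℝ (EuclideanSpace ℝ (Fin n)))
    (y : EuclideanSpace ℝ (Fin n)) :
    ‖y‖ ^ 2 = ∑ j, (B.repr y j) ^ 2 := by
  rw [← real_inner_self_eq_norm_sq, ← B.repr.inner_map_map y y, PiLp.inner_apply]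
  simp [sq]

lemma aux_inner_eq_sum (M : Matrix (Fin n) (Fin n) ℝ) (hM : M.IsHermitian)
    (y : EuclideanSpace ℝ (Fin n)) :
    ⟪y, Matrix.toEuclideanLin M y⟫
      = ∑ j, hM.eigenvalues j * (hM.eigenvectorBasis.repr y j) ^ 2 := by
  rw [← hM.eigenvectorBasis.repr.inner_map_map y (Matrix.toEuclideanLin M y), PiLp.inner_apply]
  simp only [RCLike.inner_apply, starRingEnd_apply, star_trivial, aux_repr_apply M hM]
  exact Finset.sum_congr rfl fun j _ => by ring

lemma aux_lower (hn : 0 < n) (Q : Matrix (Fin n) (Fin n) ℝ) (hQ : Q.PosDef)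
    (y : EuclideanSpace ℝ (Fin n)) :
    (⨅ i, hQ.1.eigenvalues i) * ‖y‖ ^ 2 ≤ ⟪y, Matrix.toEuclideanLin Q y⟫ := by
  haveI : Nonempty (Fin n) := ⟨⟨0, hn⟩⟩
  rw [aux_inner_eq_sum Q hQ.1, aux_normsq hQ.1.eigenvectorBasis, Finset.mul_sum]
  refine Finset.sum_le_sum fun j _ => ?_
  exact mul_le_mul_of_nonneg_right
    (ciInf_le (Set.Finite.bddBelow (Set.finite_range _)) j) (sq_nonneg _)

lemma aux_norm_le (hn : 0 < n) (P : Matrix (Fin n) (Fin n) ℝ) (hP : P.PosDef)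
    (y : EuclideanSpace ℝ (Fin n)) :
    ‖Matrix.toEuclideanLin P y‖ ≤ (⨆ i, hP.1.eigenvalues i) * ‖y‖ := by
  haveI : Nonempty (Fin n) := ⟨⟨0, hn⟩⟩
  set M := ⨆ i, hP.1.eigenvalues i with hM
  have hle : ∀ j, hP.1.eigenvalues j ≤ M :=
    fun j => le_ciSup (Set.Finite.bddAbove (Set.finite_range _)) j
  have hM0 : 0 ≤ M := le_trans (hP.eigenvalues_pos ⟨0, hn⟩).le (hle _)
  have h2 : ‖Matrix.toEuclideanLin P y‖ ^ 2 ≤ (M * ‖y‖) ^ 2 := by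
    rw [aux_normsq hP.1.eigenvectorBasis, mul_pow, aux_normsq hP.1.eigenvectorBasis y,
      Finset.mul_sum]
    refine Finset.sum_le_sum fun j _ => ?_
    rw [aux_repr_apply P hP.1, mul_pow]
    exact mul_le_mul_of_nonneg_right
      (pow_le_pow_left₀ (hP.eigenvalues_pos j).le (hle j) 2) (sq_nonneg _)
  exact le_of_pow_le_pow_left₀ two_ne_zero (by positivity) h2

end Aux

/-- Lyapunov's direct method: if `P A + Aᵀ P = −Q` with `P, Q` symmetric
positive definite, `f` is `ρ`-Lipschitz with `f 0 = 0` and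
`ρ ≤ λ_min(Q) / (2 λ_max(P))`, then along every differentiable trajectory of
`ẋ = A x + f(x)` the Lyapunov function `t ↦ ⟨x(t), P x(t)⟩` is non-increasing. -/
theorem lyapunov_function_antitone (n : ℕ) (hn : 0 < n)
    (A P Q : Matrix (Fin n) (Fin n) ℝ)
    (hP : P.PosDef) (hQ : Q.PosDef)
    (hLyap : P * A + Aᵀ * P = -Q)
    (f : EuclideanSpace ℝ (Fin n) → EuclideanSpace ℝ (Fin n))
    (ρ : ℝ) (hρ0 : 0 ≤ ρ)
    (hLip : ∀ x y : EuclideanSpace ℝ (Fin n), ‖f x - f y‖ ≤ ρ * ‖x - y‖)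
    (hf0 : f 0 = 0)
    (hρ : ρ ≤ (⨅ i, hQ.1.eigenvalues i) / (2 * ⨆ i, hP.1.eigenvalues i))
    (x : ℝ → EuclideanSpace ℝ (Fin n))
    (hx : ∀ t : ℝ, HasDerivAt x (Matrix.toEuclideanLin A (x t) + f (x t)) t) :
    Antitone fun t : ℝ => ⟪x t, Matrix.toEuclideanLin P (x t)⟫ := by
  haveI : Nonempty (Fin n) := ⟨⟨0, hn⟩⟩
  set m := ⨅ i, hQ.1.eigenvalues i with hm
  set M := ⨆ i, hP.1.eigenvalues i with hM
  have hMpos : 0 < M :=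
    lt_of_lt_of_le (hP.eigenvalues_pos ⟨0, hn⟩)
      (le_ciSup (Set.Finite.bddAbove (Set.finite_range _)) _)
  have hkey : ρ * (2 * M) ≤ m := by
    rwa [← le_div_iff₀ (by positivity)]
  have hderiv : ∀ t : ℝ, HasDerivAt (fun t : ℝ => ⟪x t, Matrix.toEuclideanLin P (x t)⟫)
      (⟪x t, Matrix.toEuclideanLin P (Matrix.toEuclideanLin A (x t) + f (x t))⟫ +
        ⟪Matrix.toEuclideanLin A (x t) + f (x t), Matrix.toEuclideanLin P (x t)⟫) t := by
    intro t
    have hP' : HasDerivAt (fun s : ℝ => Matrix.toEuclideanLin P (x s))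
        (Matrix.toEuclideanLin P (Matrix.toEuclideanLin A (x t) + f (x t))) t := by
      simpa [Function.comp_def] using
        ((LinearMap.toContinuousLinearMap (Matrix.toEuclideanLin P)).hasFDerivAt.comp_hasDerivAt
          t (hx t))
    exact HasDerivAt.inner ℝ (hx t) hP'
  apply antitone_of_deriv_nonpos
  · exact fun t => (hderiv t).differentiableAt
  · intro t
    rw [(hderiv t).deriv]
    set u := x t with hu
    set v := f u with hv
    have hfv : ‖v‖ ≤ ρ * ‖u‖ := by simpa [hf0] using hLip u 0
    have hQu : m * ‖u‖ ^ 2 ≤ ⟪u, Matrix.toEuclideanLin Q u⟫ := aux_lower hn Q hQ u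
    have hPn : ‖Matrix.toEuclideanLin P v‖ ≤ M * ‖v‖ := aux_norm_le hn P hP v
    have hsymP : LinearMap.IsSymmetric (Matrix.toEuclideanLin P) :=
      Matrix.isHermitian_iff_isSymmetric.mp hP.1
    have hQid : ⟪u, Matrix.toEuclideanLin P (Matrix.toEuclideanLin A u)⟫
        + ⟪Matrix.toEuclideanLin A u, Matrix.toEuclideanLin P u⟫
        = -⟪u, Matrix.toEuclideanLin Q u⟫ := by
      rw [← aux_toEuclideanLin_mul_apply, ← aux_inner_transpose A,
        ← aux_toEuclideanLin_mul_apply, ← inner_add_right, ← LinearMap.add_apply, ← map_add,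
        hLyap]
      simp
    have hfPu : ⟪v, Matrix.toEuclideanLin P u⟫ = ⟪u, Matrix.toEuclideanLin P v⟫ := by
      rw [← hsymP, real_inner_comm]
    have hPvle : ⟪u, Matrix.toEuclideanLin P v⟫ ≤ ‖u‖ * (M * (ρ * ‖u‖)) := by
      calc ⟪u, Matrix.toEuclideanLin P v⟫ ≤ ‖u‖ * ‖Matrix.toEuclideanLin P v‖ :=
            real_inner_le_norm _ _
        _ ≤ ‖u‖ * (M * ‖v‖) := by
            exact mul_le_mul_of_nonneg_left hPn (norm_nonneg _)
        _ ≤ ‖u‖ * (M * (ρ * ‖u‖)) := by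
            exact mul_le_mul_of_nonneg_left
              (mul_le_mul_of_nonneg_left hfv hMpos.le) (norm_nonneg _)
    have hexp : ⟪u, Matrix.toEuclideanLin P (Matrix.toEuclideanLin A u + v)⟫ +
        ⟪Matrix.toEuclideanLin A u + v, Matrix.toEuclideanLin P u⟫
        = -⟪u, Matrix.toEuclideanLin Q u⟫ + 2 * ⟪u, Matrix.toEuclideanLin P v⟫ := by
      rw [map_add, inner_add_right, inner_add_left, hfPu, ← hQid]
      ring
    rw [hexp]
    nlinarith [sq_nonneg ‖u‖, norm_nonneg u]
end
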